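/- arXiv:2001.11179 — 4 statements merged into one kernel-verified Lean document; each statement's English description precedes it below -/
import Mathlib

section
/- Let L be the matrix-valued Laplacian of a matrix-weighted graph on n nodes with symmetric positive semidefinite edge weights A_ij. Then the null space of L consists exactly of those vectors x = (x_1, …, x_n) ∈ ℝ^{dn} (each x_i ∈ ℝ^d) such that A_ij (x_i − x_j) = 0 for all pairs i, j. In particular null(L) = span{R, H}, where R is the consensus subspace and H = {(v_1,…,v_n) : (v_i − v_j) ∈ null(A_ij) for every edge (i,j)}. -/
open Matrix Finset Filter

/-- The matrix-valued Laplacian of a matrix-weighted graph on `n` nodes with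
state dimension `d`: the `(i,j)` off-diagonal block is `-A i j` and the `i`-th
diagonal block is `∑ k ≠ i, A i k`. -/
noncomputable def mwLaplacian {n d : ℕ} (A : Fin n → Fin n → Matrix (Fin d) (Fin d) ℝ) :
    Matrix (Fin n × Fin d) (Fin n × Fin d) ℝ :=
  fun p q =>
    if p.1 = q.1 then ∑ k ∈ Finset.univ.erase p.1, A p.1 k p.2 q.2
    else -(A p.1 q.1 p.2 q.2)

/-- Membership in the consensus subspace `R = range (1ₙ ⊗ I_d)`:
all blocks of `x` are equal. -/
def isConsensus {n d : ℕ} (x : Fin n × Fin d → ℝ) : Prop :=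
  ∃ v : Fin d → ℝ, ∀ p : Fin n × Fin d, x p = v p.2

lemma mwL_entry {n d : ℕ} (A : Fin n → Fin n → Matrix (Fin d) (Fin d) ℝ)
    (hdiag : ∀ i, A i i = 0) (i j : Fin n) (a b : Fin d) :
    mwLaplacian A (i, a) (j, b) = (if i = j then ∑ k, A i k a b else 0) - A i j a b := by
  unfold mwLaplacian
  dsimp only
  by_cases h : i = j
  · subst h
    rw [if_pos rfl, if_pos rfl, Finset.sum_erase_eq_sub (Finset.mem_univ i), hdiag]

  · rw [if_neg h, if_neg h]; ring

lemma mwL_mulVec {n d : ℕ} (A : Fin n → Fin n → Matrix (Fin d) (Fin d) ℝ)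
    (hdiag : ∀ i, A i i = 0) (x : Fin n × Fin d → ℝ) (i : Fin n) (a : Fin d) :
    (mwLaplacian A).mulVec x (i, a)
      = ∑ k, (A i k).mulVec (fun b => x (i, b) - x (k, b)) a := by
  rw [Matrix.mulVec, dotProduct, Fintype.sum_prod_type]
  simp only [mwL_entry A hdiag, sub_mul, ite_mul, zero_mul, Finset.sum_sub_distrib]
  simp only [Matrix.mulVec, dotProduct, mul_sub, Finset.sum_sub_distrib]
  congr 1
  · rw [Finset.sum_comm]
    simp only [Finset.sum_ite_eq, Finset.mem_univ, if_true]
    rw [Finset.sum_comm]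
    congr 1; ext b
    rw [Finset.sum_mul]

/-- The Euclidean norm on `ι → ℝ`. -/
noncomputable def euclNorm {ι : Type*} [Fintype ι] (x : ι → ℝ) : ℝ :=
  Real.sqrt (x ⬝ᵥ x)

/-- The null space of the matrix-valued Laplacian consists exactly of
those `x = (x_1, …, x_n)` with `A i j • (x_i - x_j) = 0` for all pairs `i, j`
(this set is `span{R, H}` of the paper). -/
theorem laplacian_null_space {n d : ℕ} (hn : 2 ≤ n) (hd : 1 ≤ d)
    (A : Fin n → Fin n → Matrix (Fin d) (Fin d) ℝ)
    (hpsd : ∀ i j, (A i j).PosSemidef)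
    (hsym : ∀ i j, A i j = A j i)
    (hdiag : ∀ i, A i i = 0) :
    ∀ x : Fin n × Fin d → ℝ,
      (mwLaplacian A).mulVec x = 0 ↔
        ∀ i j : Fin n, (A i j).mulVec (fun a => x (i, a) - x (j, a)) = 0 := by

  intro x
  constructor
  · intro hx
    set v : Fin n → Fin n → Fin d → ℝ := fun i k b => x (i, b) - x (k, b) with hv
    set T : Fin n → Fin n → ℝ :=
      fun i k => (fun a => x (i, a)) ⬝ᵥ (A i k).mulVec (v i k) with hT
    set Q : Fin n → Fin n → ℝ := fun i k => v i k ⬝ᵥ (A i k).mulVec (v i k) with hQ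
    have hxLx : x ⬝ᵥ (mwLaplacian A).mulVec x = 0 := by rw [hx, dotProduct_zero]
    have hexp : x ⬝ᵥ (mwLaplacian A).mulVec x = ∑ i, ∑ k, T i k := by
      rw [dotProduct, Fintype.sum_prod_type]
      refine Finset.sum_congr rfl fun i _ => ?_
      simp only [mwL_mulVec A hdiag, Finset.mul_sum]
      rw [Finset.sum_comm]
      rfl
    have hneg : ∑ i, ∑ k, ((fun a => x (k, a)) ⬝ᵥ (A i k).mulVec (v i k))
        = -∑ i, ∑ k, T i k := by
      rw [Finset.sum_comm, ← Finset.sum_neg_distrib]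
      refine Finset.sum_congr rfl fun k _ => ?_
      rw [← Finset.sum_neg_distrib]
      refine Finset.sum_congr rfl fun i _ => ?_
      have hvik : v i k = -v k i := by funext b; simp [hv]
      rw [hsym i k, hvik, Matrix.mulVec_neg, dotProduct_neg]
    have hQsum : ∑ i, ∑ k, Q i k = 0 := by
      have : ∀ i k, Q i k = T i k - ((fun a => x (k, a)) ⬝ᵥ (A i k).mulVec (v i k)) := by
        intro i k
        rw [hQ, hT, ← sub_dotProduct]
        rfl
      simp only [this, Finset.sum_sub_distrib]
      rw [hneg, ← hexp, hxLx]
      ring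
    have hQnn : ∀ i k, 0 ≤ Q i k := by
      intro i k
      have := (hpsd i k).dotProduct_mulVec_nonneg (v i k)
      simpa using this
    have hQzero : ∀ i k : Fin n, Q i k = 0 := by
      intro i k
      have h1 : ∀ i ∈ Finset.univ, (0:ℝ) ≤ ∑ k, Q i k :=
        fun i _ => Finset.sum_nonneg fun k _ => hQnn i k
      have h2 := (Finset.sum_eq_zero_iff_of_nonneg h1).mp hQsum i (Finset.mem_univ i)
      exact (Finset.sum_eq_zero_iff_of_nonneg fun k _ => hQnn i k).mp h2 k (Finset.mem_univ k)
    intro i j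
    have := ((hpsd i j).dotProduct_mulVec_zero_iff (v i j)).mp (by simpa using hQzero i j)
    exact this
  · intro h
    funext p
    obtain ⟨i, a⟩ := p
    rw [Pi.zero_apply, mwL_mulVec A hdiag]
    exact Finset.sum_eq_zero fun k _ => by simpa using congrFun (h i k) a
end

section
/- Let L be the matrix-valued Laplacian of a matrix-weighted graph on n nodes with symmetric positive semidefinite edge weights. Then the following are equivalent: (i) for every initial state x(0) ∈ ℝ^{dn}, the solution x(t) = exp(−tL) x(0) converges as t → ∞ to the average consensus value x_f = 1_n ⊗ ((1/n) Σ_{i=1}^n x_i(0)); (ii) null(L) = R, the consensus subspace. -/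
open Matrix Finset Filter

section AuxExp

variable {ι : Type*} [Fintype ι] [DecidableEq ι]

lemma pow_mulVec_eigen (M : Matrix ι ι ℝ) (v : ι → ℝ) (c : ℝ)
    (h : M.mulVec v = c • v) (k : ℕ) : (M ^ k).mulVec v = c ^ k • v := by
  induction k with
  | zero => simp [Matrix.one_mulVec]
  | succ k ih =>
    rw [pow_succ, ← Matrix.mulVec_mulVec, h, Matrix.mulVec_smul, ih, smul_smul, pow_succ]
    ring_nf

lemma exp_mulVec_eigen (M : Matrix ι ι ℝ) (v : ι → ℝ) (c : ℝ)
    (h : M.mulVec v = c • v) :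
    (NormedSpace.exp M).mulVec v = Real.exp c • v := by
  letI : SeminormedRing (Matrix ι ι ℝ) := Matrix.linftyOpSemiNormedRing
  letI : NormedRing (Matrix ι ι ℝ) := Matrix.linftyOpNormedRing
  letI : NormedAlgebra ℝ (Matrix ι ι ℝ) := Matrix.linftyOpNormedAlgebra
  let f : Matrix ι ι ℝ →ₗ[ℝ] (ι → ℝ) :=
    { toFun := fun N => N.mulVec v
      map_add' := fun N₁ N₂ => Matrix.add_mulVec N₁ N₂ v
      map_smul' := fun c N => Matrix.smul_mulVec c N v }
  have hsum : Summable fun k : ℕ => ((Nat.factorial k : ℝ))⁻¹ • M ^ k :=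
    NormedSpace.expSeries_summable' M
  have h1 : (NormedSpace.exp M).mulVec v
      = ∑' k : ℕ, (((Nat.factorial k : ℝ))⁻¹ • M ^ k).mulVec v := by
    rw [NormedSpace.exp_eq_tsum ℝ]
    exact f.toContinuousLinearMap.map_tsum hsum
  rw [h1]
  have h2 : ∀ k : ℕ, (((Nat.factorial k : ℝ))⁻¹ • M ^ k).mulVec v
      = (((Nat.factorial k : ℝ))⁻¹ * c ^ k) • v := by
    intro k
    rw [Matrix.smul_mulVec, pow_mulVec_eigen M v c h k, smul_smul]
  simp_rw [h2]
  have h3 : Summable fun k : ℕ => ((Nat.factorial k : ℝ))⁻¹ * c ^ k := by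
    simpa [smul_eq_mul] using NormedSpace.expSeries_summable' (𝕂 := ℝ) c
  rw [h3.tsum_smul_const]
  congr 1
  rw [Real.exp_eq_exp_ℝ, NormedSpace.exp_eq_tsum ℝ]
  simp [smul_eq_mul]

end AuxExp

section AuxLap

variable {n d : ℕ} {A : Fin n → Fin n → Matrix (Fin d) (Fin d) ℝ}

lemma mwL_apply (hdiag : ∀ i, A i i = 0) (p q : Fin n × Fin d) :
    mwLaplacian A p q =
      (if p.1 = q.1 then ∑ k : Fin n, A p.1 k p.2 q.2 else 0) - A p.1 q.1 p.2 q.2 := by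
  unfold mwLaplacian
  by_cases h : p.1 = q.1
  · simp only [h, if_true]
    rw [← h, Finset.sum_erase _ (by rw [hdiag]; rfl), hdiag]
    simp
  · simp [h]

lemma mwL_herm (hpsd : ∀ i j, (A i j).PosSemidef) (hsym : ∀ i j, A i j = A j i)
    (hdiag : ∀ i, A i i = 0) : (mwLaplacian A).IsHermitian := by
  have hentry : ∀ i j a b, A i j a b = A i j b a := by
    intro i j a b
    have h := (hpsd i j).1
    conv_lhs => rw [← h]
    simp [Matrix.conjTranspose_apply]
  have hAsym : ∀ i j a b, A i j a b = A j i b a := by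
    intro i j a b
    rw [hentry, hsym]
  apply Matrix.IsHermitian.ext
  rintro ⟨i, a⟩ ⟨j, b⟩
  rw [star_trivial, mwL_apply hdiag, mwL_apply hdiag]
  simp only
  by_cases h : i = j
  · subst h
    simp only [if_true]
    congr 1
    · exact Finset.sum_congr rfl fun k _ => hentry _ _ _ _
    · exact hentry _ _ _ _
  · rw [if_neg (Ne.symm h), if_neg h, hAsym j i b a]

lemma mwL_posSemidef (hpsd : ∀ i j, (A i j).PosSemidef) (hsym : ∀ i j, A i j = A j i)
    (hdiag : ∀ i, A i i = 0) : (mwLaplacian A).PosSemidef := by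
  have hQ : ∀ x : Fin n × Fin d → ℝ, x ⬝ᵥ (mwLaplacian A).mulVec x
      = (∑ i, ∑ k, ∑ a, ∑ b, x (i,a) * A i k a b * x (i,b))
        - ∑ i, ∑ j, ∑ a, ∑ b, x (i,a) * A i j a b * x (j,b) := by
    intro x
    simp only [dotProduct, Matrix.mulVec, mwL_apply hdiag, Fintype.sum_prod_type,
      Finset.mul_sum, sub_mul, mul_sub, ite_mul, mul_ite, zero_mul, mul_zero,
      Finset.sum_sub_distrib, Finset.sum_ite_irrel, Finset.sum_const_zero,
      Finset.sum_ite_eq, Finset.mem_univ, if_true, Finset.sum_mul, mul_assoc]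
    congr 1
    · refine Finset.sum_congr rfl fun i _ => ?_
      exact (Finset.sum_congr rfl fun a _ => Finset.sum_comm).trans Finset.sum_comm
    · refine Finset.sum_congr rfl fun i _ => ?_
      rw [Finset.sum_comm]
  refine Matrix.PosSemidef.of_dotProduct_mulVec_nonneg (mwL_herm hpsd hsym hdiag) fun x => ?_
  rw [star_trivial, hQ x]
  have key : ∑ i, ∑ j, ∑ a, ∑ b, (x (i,a) - x (j,a)) * A i j a b * (x (i,b) - x (j,b))
      = 2 * ((∑ i, ∑ k, ∑ a, ∑ b, x (i,a) * A i k a b * x (i,b))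
        - ∑ i, ∑ j, ∑ a, ∑ b, x (i,a) * A i j a b * x (j,b)) := by
    have expand : ∑ i, ∑ j, ∑ a, ∑ b, (x (i,a) - x (j,a)) * A i j a b * (x (i,b) - x (j,b))
        = ((∑ i, ∑ j, ∑ a, ∑ b, x (i,a) * A i j a b * x (i,b))
            - ∑ i, ∑ j, ∑ a, ∑ b, x (j,a) * A i j a b * x (i,b))
          - ((∑ i, ∑ j, ∑ a, ∑ b, x (i,a) * A i j a b * x (j,b))
            - ∑ i, ∑ j, ∑ a, ∑ b, x (j,a) * A i j a b * x (j,b)) := by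
      simp only [sub_mul, mul_sub, Finset.sum_sub_distrib]
    have e4 : ∑ i, ∑ j, ∑ a, ∑ b, x (j,a) * A i j a b * x (j,b)
        = ∑ i, ∑ k, ∑ a, ∑ b, x (i,a) * A i k a b * x (i,b) := by
      rw [Finset.sum_comm]
      exact Finset.sum_congr rfl fun u _ => Finset.sum_congr rfl fun w _ => by rw [hsym w u]
    have e3 : ∑ i, ∑ j, ∑ a, ∑ b, x (j,a) * A i j a b * x (i,b)
        = ∑ i, ∑ j, ∑ a, ∑ b, x (i,a) * A i j a b * x (j,b) := by
      rw [Finset.sum_comm]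
      exact Finset.sum_congr rfl fun u _ => Finset.sum_congr rfl fun w _ => by rw [hsym w u]
    rw [expand, e3, e4]; ring
  have hnn : 0 ≤ ∑ i, ∑ j, ∑ a, ∑ b, (x (i,a) - x (j,a)) * A i j a b * (x (i,b) - x (j,b)) := by
    refine Finset.sum_nonneg fun i _ => Finset.sum_nonneg fun j _ => ?_
    have h := (hpsd i j).dotProduct_mulVec_nonneg (fun a => x (i,a) - x (j,a))
    rw [star_trivial] at h
    simpa [dotProduct, Matrix.mulVec, Finset.mul_sum, mul_assoc] using h
  linarith

lemma mwL_consensus_ker (hdiag : ∀ i, A i i = 0) (v : Fin d → ℝ) :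
    (mwLaplacian A).mulVec (fun p => v p.2) = 0 := by
  funext p
  obtain ⟨i, a⟩ := p
  simp only [Matrix.mulVec, dotProduct, mwL_apply hdiag, Fintype.sum_prod_type, sub_mul,
    ite_mul, zero_mul, Finset.sum_sub_distrib, Finset.sum_ite_irrel, Finset.sum_const_zero,
    Finset.sum_ite_eq, Finset.mem_univ, if_true, Pi.zero_apply]
  rw [sub_eq_zero]
  simp_rw [Finset.sum_mul]
  rw [Finset.sum_comm]

end AuxLap

/-- For a matrix-weighted time-invariant network, the consensus flow
`x(t) = exp(-tL) x(0)` converges to the average consensus value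
`x_f = 1ₙ ⊗ ((1/n) ∑ i, x_i(0))` for every initial state if and only if
`null(L) = R`, the consensus subspace. -/
theorem average_consensus_iff_null_eq_consensus {n d : ℕ} (hn : 2 ≤ n) (hd : 1 ≤ d)
    (A : Fin n → Fin n → Matrix (Fin d) (Fin d) ℝ)
    (hpsd : ∀ i j, (A i j).PosSemidef)
    (hsym : ∀ i j, A i j = A j i)
    (hdiag : ∀ i, A i i = 0) :
    (∀ x0 : Fin n × Fin d → ℝ,
        Tendsto (fun t : ℝ => (NormedSpace.exp (-(t • mwLaplacian A))).mulVec x0)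
          atTop (nhds (fun p => (n : ℝ)⁻¹ * ∑ i : Fin n, x0 (i, p.2))))
      ↔ (∀ x : Fin n × Fin d → ℝ, (mwLaplacian A).mulVec x = 0 ↔ isConsensus x) := by
  set L := mwLaplacian A with hLdef
  have hLpsd : L.PosSemidef := mwL_posSemidef hpsd hsym hdiag
  have hherm : L.IsHermitian := hLpsd.1
  have hn0 : (n : ℝ) ≠ 0 := Nat.cast_ne_zero.mpr (by omega)
  have exp_fix : ∀ (t : ℝ) (x : Fin n × Fin d → ℝ), L.mulVec x = 0 →
      (NormedSpace.exp (-(t • L))).mulVec x = x := by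
    intro t x hx
    have h : (-(t • L)).mulVec x = (0 : ℝ) • x := by
      rw [Matrix.neg_mulVec, Matrix.smul_mulVec, hx]
      simp
    rw [exp_mulVec_eigen _ _ _ h]
    simp
  constructor
  · intro H x
    constructor
    · intro hx
      have h2 : Tendsto (fun t : ℝ => (NormedSpace.exp (-(t • L))).mulVec x)
          atTop (nhds x) := by
        simp only [fun t => exp_fix t x hx]
        exact tendsto_const_nhds
      have h3 := tendsto_nhds_unique (H x) h2
      exact ⟨fun b => (n : ℝ)⁻¹ * ∑ i : Fin n, x (i, b), fun p => (congrFun h3 p).symm⟩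
    · rintro ⟨v, hv⟩
      have hx : x = fun p => v p.2 := funext hv
      rw [hx]
      exact mwL_consensus_ker hdiag v
  · intro hker x0
    set avg : Fin n × Fin d → ℝ := fun p => (n : ℝ)⁻¹ * ∑ i : Fin n, x0 (i, p.2) with havgdef
    have hLavg : L.mulVec avg = 0 := mwL_consensus_ker hdiag fun b => (n : ℝ)⁻¹ * ∑ i, x0 (i, b)
    set y : Fin n × Fin d → ℝ := fun p => x0 p - avg p with hydef
    have hsumy : ∀ b, ∑ i, y (i, b) = 0 := by
      intro b
      simp only [hydef, havgdef]
      rw [Finset.sum_sub_distrib, Finset.sum_const, Finset.card_univ, Fintype.card_fin,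
        nsmul_eq_mul]
      field_simp
      ring
    -- spectral decomposition
    set u := hherm.eigenvectorBasis with hudef
    set ev := hherm.eigenvalues with hevdef
    set yE : EuclideanSpace ℝ (Fin n × Fin d) := (WithLp.equiv 2 _).symm y with hyEdef
    set c : Fin n × Fin d → ℝ := fun k => u.repr yE k with hcdef
    have hy_sum : y = ∑ k : Fin n × Fin d, c k • ⇑(u k) :=
      by
        have h := congrArg WithLp.ofLp (u.sum_repr yE)
        rw [WithLp.ofLp_sum] at h
        simp only [WithLp.ofLp_smul] at h
        exact h.symm
    have heig : ∀ k, L.mulVec (⇑(u k)) = ev k • ⇑(u k) := fun k =>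
      hherm.mulVec_eigenvectorBasis k
    have hexp : ∀ (t : ℝ) k, (NormedSpace.exp (-(t • L))).mulVec (⇑(u k))
        = Real.exp (-(t * ev k)) • ⇑(u k) := by
      intro t k
      apply exp_mulVec_eigen
      rw [Matrix.neg_mulVec, Matrix.smul_mulVec, heig k, smul_smul, ← neg_smul]
    have key : ∀ t : ℝ, (NormedSpace.exp (-(t • L))).mulVec x0
        = avg + ∑ k : Fin n × Fin d, (c k * Real.exp (-(t * ev k))) • ⇑(u k) := by
      intro t
      have hx0 : x0 = avg + y := by funext p; simp [hydef]
      rw [hx0, Matrix.mulVec_add, exp_fix t avg hLavg]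
      congr 1
      rw [hy_sum]
      have : (NormedSpace.exp (-(t • L))).mulVec (∑ k : Fin n × Fin d, c k • ⇑(u k))
          = ∑ k : Fin n × Fin d, (NormedSpace.exp (-(t • L))).mulVec (c k • ⇑(u k)) := by
        simpa only [Matrix.mulVecLin_apply] using
          map_sum ((NormedSpace.exp (-(t • L))).mulVecLin)
            (fun k => c k • ⇑(u k)) Finset.univ
      rw [this]
      refine Finset.sum_congr rfl fun k _ => ?_
      rw [Matrix.mulVec_smul, hexp t k, smul_smul]
    have hzero : ∀ k, ev k = 0 → c k = 0 := by
      intro k hk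
      have hker' : L.mulVec (⇑(u k)) = 0 := by rw [heig k, hk, zero_smul]
      obtain ⟨v, hv⟩ := (hker (⇑(u k))).mp hker'
      have : c k = ∑ p : Fin n × Fin d, u k p * y p := by
        show u.repr yE k = _
        rw [u.repr_apply_apply, PiLp.inner_apply]
        simp only [RCLike.inner_apply, conj_trivial]
        exact Finset.sum_congr rfl fun _ _ => mul_comm _ _
      rw [this]
      rw [Fintype.sum_prod_type]
      have : ∀ i : Fin n, ∑ b : Fin d, u k (i, b) * y (i, b)
          = ∑ b : Fin d, v b * y (i, b) := by
        intro i
        exact Finset.sum_congr rfl fun b _ => by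
          rw [show u k (i, b) = v b from hv (i, b)]
      simp_rw [this]
      rw [Finset.sum_comm]
      simp_rw [← Finset.mul_sum]
      simp [hsumy]
    have hterm : ∀ k : Fin n × Fin d,
        Tendsto (fun t : ℝ => (c k * Real.exp (-(t * ev k))) • ⇑(u k)) atTop
          (nhds (0 : Fin n × Fin d → ℝ)) := by
      intro k
      by_cases hk : ev k = 0
      · have hc : c k = 0 := hzero k hk
        simp only [hc, zero_mul, zero_smul]
        exact tendsto_const_nhds
      · have hpos : 0 < ev k := lt_of_le_of_ne (hLpsd.eigenvalues_nonneg k) (Ne.symm hk)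
        have h1 : Tendsto (fun t : ℝ => t * ev k) atTop atTop :=
          Tendsto.atTop_mul_const hpos tendsto_id
        have h2 : Tendsto (fun t : ℝ => -(t * ev k)) atTop atBot :=
          tendsto_neg_atTop_atBot.comp h1
        have h3 : Tendsto (fun t : ℝ => Real.exp (-(t * ev k))) atTop (nhds 0) :=
          Real.tendsto_exp_atBot.comp h2
        have h4 : Tendsto (fun t : ℝ => c k * Real.exp (-(t * ev k))) atTop (nhds 0) := by
          simpa using h3.const_mul (c k)
        have h5 := h4.smul_const (⇑(u k))
        simpa using h5
    have hlim : Tendsto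
        (fun t : ℝ => ∑ k : Fin n × Fin d, (c k * Real.exp (-(t * ev k))) • ⇑(u k))
        atTop (nhds (0 : Fin n × Fin d → ℝ)) := by
      have h := tendsto_finset_sum (Finset.univ : Finset (Fin n × Fin d))
        (fun k _ => hterm k)
      simpa using h
    have final : Tendsto (fun t : ℝ =>
        avg + ∑ k : Fin n × Fin d, (c k * Real.exp (-(t * ev k))) • ⇑(u k))
        atTop (nhds avg) := by
      simpa using tendsto_const_nhds.add hlim
    simpa only [key] using final
end

section
/- Let L^0, L^1, …, L^{m−1} be matrix-valued Laplacians of matrix-weighted graphs on n nodes (so each L^k is symmetric positive semidefinite and R ⊆ null(L^k)), let Δt_0, …, Δt_{m−1} > 0, and set Φ = exp(−Δt_{m−1} L^{m−1}) ··· exp(−Δt_1 L^1) exp(−Δt_0 L^0). Then the following are equivalent: (i) ⋂_{k=0}^{m−1} null(L^k) = R; (ii) ‖Φ x‖ < ‖x‖ for every nonzero x orthogonal to R. (Statement (ii) is equivalent to the (d+1)-st largest eigenvalue μ_{d+1} of Φ^T Φ being strictly less than 1.) -/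
open Matrix Finset Filter

/-- The ordered product `E (m-1) * ⋯ * E 1 * E 0` of a sequence of matrices. -/
noncomputable def prodSeq {ι : Type*} [Fintype ι] [DecidableEq ι]
    (E : ℕ → Matrix ι ι ℝ) : ℕ → Matrix ι ι ℝ
  | 0 => 1
  | k + 1 => E k * prodSeq E k

section Key
variable {ι : Type*} [Fintype ι] [DecidableEq ι]

lemma psd_smul {M : Matrix ι ι ℝ} (hM : M.PosSemidef) {a : ℝ} (ha : 0 ≤ a) :
    (a • M).PosSemidef := by
  refine ⟨?_, fun x => ?_⟩
  · unfold Matrix.IsHermitian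
    rw [conjTranspose_smul, hM.1]
    simp
  · exact (hM.smul ha).2 x

lemma key_exp {M : Matrix ι ι ℝ} (hM : M.PosSemidef) (x : ι → ℝ) :
    (M.mulVec x = 0 → (NormedSpace.exp (-M)).mulVec x = x) ∧
    (M.mulVec x ≠ 0 →
      ((NormedSpace.exp (-M)).mulVec x) ⬝ᵥ ((NormedSpace.exp (-M)).mulVec x) < x ⬝ᵥ x) := by
  classical
  set U : Matrix ι ι ℝ := (hM.1.eigenvectorUnitary : Matrix ι ι ℝ) with hUdef
  have hUU : star U * U = 1 := Matrix.mem_unitaryGroup_iff'.mp (hM.1.eigenvectorUnitary).2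
  have hUU' : U * star U = 1 := Matrix.mem_unitaryGroup_iff.mp (hM.1.eigenvectorUnitary).2
  set lam := hM.1.eigenvalues with hlam
  have hln : ∀ i, 0 ≤ lam i := hM.eigenvalues_nonneg
  have hspec : M = U * diagonal lam * star U := by
    have h := hM.1.spectral_theorem
    rwa [show (RCLike.ofReal ∘ hM.1.eigenvalues : ι → ℝ) = lam from funext fun i => by simp [hlam]] at h
  have hinvU : U⁻¹ = star U := Matrix.inv_eq_left_inv hUU
  have hUnit : IsUnit U := ⟨⟨U, star U, hUU', hUU⟩, rfl⟩
  have hexp : NormedSpace.exp (-M)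
      = U * diagonal (fun i => Real.exp (-lam i)) * star U := by
    have hneg : -M = U * diagonal (fun i => -lam i) * star U := by
      rw [hspec]
      rw [show (diagonal fun i => -lam i) = -diagonal lam from (diagonal_neg lam).symm,
        Matrix.mul_neg, Matrix.neg_mul]
    rw [hneg, ← hinvU, Matrix.exp_conj U _ hUnit, Matrix.exp_diagonal, hinvU]
    congr 2
    funext i
    rw [Pi.exp_def]
    simp [← Real.exp_eq_exp_ℝ]
  set y := (star U).mulVec x with hy
  have hxy : U.mulVec y = x := by rw [hy, mulVec_mulVec, hUU', one_mulVec]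
  have hUT : star U = Uᵀ := by
    rw [Matrix.star_eq_conjTranspose, conjTranspose_eq_transpose_of_trivial]
  have hnorm : ∀ v : ι → ℝ, (U.mulVec v) ⬝ᵥ (U.mulVec v) = v ⬝ᵥ v := by
    intro v
    rw [dotProduct_mulVec, ← vecMul_transpose, vecMul_vecMul]
    rw [show Uᵀ * U = 1 from by rw [← hUT]; exact hUU, vecMul_one]
  have hUinj : ∀ z : ι → ℝ, U.mulVec z = 0 → z = 0 := by
    intro z hz
    have : (star U * U).mulVec z = 0 := by
      rw [← mulVec_mulVec, hz, mulVec_zero]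
    rwa [hUU, one_mulVec] at this
  have hMx : M.mulVec x = U.mulVec ((diagonal lam).mulVec y) := by
    conv_lhs => rw [hspec]
    rw [← mulVec_mulVec, ← mulVec_mulVec]
  have hEx : (NormedSpace.exp (-M)).mulVec x
      = U.mulVec ((diagonal (fun i => Real.exp (-lam i))).mulVec y) := by
    rw [hexp, ← mulVec_mulVec, ← mulVec_mulVec]
  have hM0 : M.mulVec x = 0 ↔ ∀ i, lam i * y i = 0 := by
    rw [hMx]
    constructor
    · intro h i
      have h2 := hUinj _ h
      have := congr_fun h2 i
      simpa [mulVec_diagonal] using this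
    · intro h
      have : (diagonal lam).mulVec y = 0 := by
        funext i
        simpa [mulVec_diagonal] using h i
      rw [this, mulVec_zero]
  constructor
  · intro h
    have h' := hM0.mp h
    have hdy : (diagonal (fun i => Real.exp (-lam i))).mulVec y = y := by
      funext i
      rw [mulVec_diagonal]
      rcases eq_or_ne (y i) 0 with h0 | h0
      · rw [h0, mul_zero]
      · have : lam i = 0 := by
          rcases mul_eq_zero.mp (h' i) with h1 | h1
          · exact h1
          · exact absurd h1 h0
        rw [this, neg_zero, Real.exp_zero, one_mul]
    rw [hEx, hdy, hxy]
  · intro h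
    obtain ⟨i0, hi0⟩ : ∃ i, lam i * y i ≠ 0 := by
      by_contra hc
      push_neg at hc
      exact h (hM0.mpr hc)
    have hl0 : 0 < lam i0 := lt_of_le_of_ne (hln i0) (by
      intro hh
      exact hi0 (by rw [← hh, zero_mul]))
    have hy0 : y i0 ≠ 0 := fun hh => hi0 (by rw [hh, mul_zero])
    rw [hEx, hnorm, ← hxy, hnorm]
    have hdy : ∀ i, ((diagonal (fun j => Real.exp (-lam j))).mulVec y) i
        = Real.exp (-lam i) * y i := fun i => mulVec_diagonal _ _ _
    rw [show ((diagonal (fun j => Real.exp (-lam j))).mulVec y)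
        = fun i => Real.exp (-lam i) * y i from funext hdy]
    unfold dotProduct
    apply Finset.sum_lt_sum
    · intro i _
      have he : Real.exp (-lam i) ≤ 1 := by
        rw [show (1:ℝ) = Real.exp 0 from (Real.exp_zero).symm]
        exact Real.exp_le_exp.mpr (by linarith [hln i])
      have hep : 0 < Real.exp (-lam i) := Real.exp_pos _
      show Real.exp (-lam i) * y i * (Real.exp (-lam i) * y i) ≤ y i * y i
      have h1 : Real.exp (-lam i) * Real.exp (-lam i) ≤ 1 := by nlinarith
      calc Real.exp (-lam i) * y i * (Real.exp (-lam i) * y i)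
          = (Real.exp (-lam i) * Real.exp (-lam i)) * (y i * y i) := by ring
        _ ≤ 1 * (y i * y i) := mul_le_mul_of_nonneg_right h1 (mul_self_nonneg _)
        _ = y i * y i := one_mul _
    · refine ⟨i0, Finset.mem_univ _, ?_⟩
      have he : Real.exp (-lam i0) < 1 := by
        rw [Real.exp_lt_one_iff]
        linarith
      have hep : 0 < Real.exp (-lam i0) := Real.exp_pos _
      have hy2 : 0 < y i0 * y i0 := mul_self_pos.mpr hy0
      show Real.exp (-lam i0) * y i0 * (Real.exp (-lam i0) * y i0) < y i0 * y i0
      have h1 : Real.exp (-lam i0) * Real.exp (-lam i0) < 1 := by nlinarith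
      calc Real.exp (-lam i0) * y i0 * (Real.exp (-lam i0) * y i0)
          = (Real.exp (-lam i0) * Real.exp (-lam i0)) * (y i0 * y i0) := by ring
        _ < 1 * (y i0 * y i0) := mul_lt_mul_of_pos_right h1 hy2
        _ = y i0 * y i0 := one_mul _

lemma dot_self_nonneg {x : ι → ℝ} : 0 ≤ x ⬝ᵥ x :=
  Finset.sum_nonneg fun i _ => mul_self_nonneg _

lemma euclNorm_lt_of_dot {x z : ι → ℝ} (h : z ⬝ᵥ z < x ⬝ᵥ x) :
    Real.sqrt (z ⬝ᵥ z) < Real.sqrt (x ⬝ᵥ x) :=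
  Real.sqrt_lt_sqrt dot_self_nonneg h

lemma prodSeq_fix' {E : ℕ → Matrix ι ι ℝ} {x : ι → ℝ} (m : ℕ)
    (h : ∀ k < m, (E k).mulVec x = x) :
    ((prodSeq E m).mulVec x = x) := by
  induction m with
  | zero => simp [prodSeq]
  | succ j ih =>
    show ((E j * prodSeq E j).mulVec x) = x
    rw [← mulVec_mulVec, ih (fun k hk => h k (Nat.lt_succ_of_lt hk)),
      h j (Nat.lt_succ_self j)]

end Key

/-- For matrix-valued Laplacians `L^0, …, L^{m-1}` (symmetric PSD with
`R ⊆ null(L^k)`) and dwell times `Δt k > 0`, with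
`Φ = exp(-Δt_{m-1} L^{m-1}) ⋯ exp(-Δt_0 L^0)`, the intersection of the null spaces
equals `R` if and only if `‖Φ x‖ < ‖x‖` for every nonzero `x` orthogonal to `R`
(equivalently, `μ_{d+1}(ΦᵀΦ) < 1`). -/
theorem inter_null_eq_consensus_iff_contraction {n d m : ℕ} (hn : 2 ≤ n) (hd : 1 ≤ d)
    (L : ℕ → Matrix (Fin n × Fin d) (Fin n × Fin d) ℝ) (Δt : ℕ → ℝ)
    (hpsd : ∀ k < m, (L k).PosSemidef)
    (hR : ∀ k < m, ∀ x : Fin n × Fin d → ℝ, isConsensus x → (L k).mulVec x = 0)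
    (hΔ : ∀ k < m, 0 < Δt k) :
    (∀ x : Fin n × Fin d → ℝ,
        ((∀ k < m, (L k).mulVec x = 0) ↔ isConsensus x))
      ↔ (∀ x : Fin n × Fin d → ℝ, x ≠ 0 →
          (∀ y : Fin n × Fin d → ℝ, isConsensus y → x ⬝ᵥ y = 0) →
          euclNorm
            ((prodSeq (fun k => NormedSpace.exp (-(Δt k • L k))) m).mulVec x)
            < euclNorm x) := by
  classical
  set E : ℕ → Matrix (Fin n × Fin d) (Fin n × Fin d) ℝ :=
    fun k => NormedSpace.exp (-(Δt k • L k)) with hE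
  have hMpsd : ∀ k, k < m → (Δt k • L k).PosSemidef :=
    fun k hk => psd_smul (hpsd k hk) (le_of_lt (hΔ k hk))
  have hfix : ∀ k, k < m → ∀ z : Fin n × Fin d → ℝ, (L k).mulVec z = 0 →
      (E k).mulVec z = z := by
    intro k hk z hz
    rw [hE]
    exact (key_exp (hMpsd k hk) z).1 (by rw [smul_mulVec, hz, smul_zero])
  constructor
  · -- null space condition implies contraction
    intro hL x hx hxorth
    have hxc : ¬ isConsensus x := fun hc => hx (dotProduct_self_eq_zero.mp (hxorth x hc))
    have main : ∀ j, j ≤ m →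
        euclNorm ((prodSeq E j).mulVec x) < euclNorm x ∨
        ((prodSeq E j).mulVec x = x ∧ ∀ k < j, (L k).mulVec x = 0) := by
      intro j
      induction j with
      | zero =>
        intro _
        right
        exact ⟨by simp [prodSeq], fun k hk => absurd hk (Nat.not_lt_zero k)⟩
      | succ j ih =>
        intro hj
        have hjm : j < m := hj
        have ihj := ih (Nat.le_of_succ_le hj)
        set z := (prodSeq E j).mulVec x with hz
        have hstep : (prodSeq E (j+1)).mulVec x = (E j).mulVec z := by
          show ((E j * prodSeq E j).mulVec x) = _
          rw [← mulVec_mulVec]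
        by_cases h0 : (Δt j • L j).mulVec z = 0
        · have hfixz : (E j).mulVec z = z := by
            rw [hE]; exact (key_exp (hMpsd j hjm) z).1 h0
          rcases ihj with hlt | ⟨heq, hall⟩
          · left; rw [hstep, hfixz]; exact hlt
          · right
            refine ⟨by rw [hstep, hfixz, heq], ?_⟩
            intro k hk
            rcases Nat.lt_succ_iff_lt_or_eq.mp hk with hk' | hk'
            · exact hall k hk'
            · subst hk'
              have h1 : (Δt k • L k).mulVec x = 0 := by rw [← heq]; exact h0
              rw [smul_mulVec] at h1
              exact (smul_eq_zero.mp h1).resolve_left (ne_of_gt (hΔ k hjm))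
        · left
          have hlt2 : ((E j).mulVec z) ⬝ᵥ ((E j).mulVec z) < z ⬝ᵥ z := by
            rw [hE]; exact (key_exp (hMpsd j hjm) z).2 h0
          have hzx : euclNorm z ≤ euclNorm x := by
            rcases ihj with hlt | ⟨heq, _⟩
            · exact le_of_lt hlt
            · rw [heq]
          rw [hstep]
          exact lt_of_lt_of_le (euclNorm_lt_of_dot hlt2) hzx
    rcases main m le_rfl with h | ⟨_, hall⟩
    · exact h
    · exact absurd ((hL x).mp hall) hxc
  · -- contraction implies null space condition
    intro hC x
    constructor
    · intro h0
      have hPhix : (prodSeq E m).mulVec x = x :=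
        prodSeq_fix' m (fun k hk => hfix k hk x (h0 k hk))
      set v : Fin d → ℝ := fun j => (∑ i : Fin n, x (i, j)) / n with hv
      set c : Fin n × Fin d → ℝ := fun p => v p.2 with hc
      have hcc : isConsensus c := ⟨v, fun p => rfl⟩
      set w : Fin n × Fin d → ℝ := x - c with hw
      have hn0 : (n : ℝ) ≠ 0 := by
        have : 0 < n := lt_of_lt_of_le (by norm_num) hn
        exact_mod_cast this.ne'
      have hworth : ∀ y, isConsensus y → w ⬝ᵥ y = 0 := by
        rintro y ⟨u, hu⟩
        have hsum : ∀ j : Fin d, ∑ i : Fin n, w (i, j) = 0 := by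
          intro j
          have : ∑ i : Fin n, w (i, j) = (∑ i : Fin n, x (i, j)) - n * v j := by
            simp only [hw, Pi.sub_apply, hc]
            rw [Finset.sum_sub_distrib, Finset.sum_const, Finset.card_univ,
              Fintype.card_fin, nsmul_eq_mul]
          rw [this, hv]
          field_simp
          ring
        calc w ⬝ᵥ y = ∑ i : Fin n, ∑ j : Fin d, w (i, j) * u j := by
              rw [show w ⬝ᵥ y = ∑ p : Fin n × Fin d, w p * y p from rfl,
                Fintype.sum_prod_type]
              exact Finset.sum_congr rfl fun i _ =>
                Finset.sum_congr rfl fun j _ => by rw [hu (i, j)]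
          _ = ∑ j : Fin d, (∑ i : Fin n, w (i, j)) * u j := by
              rw [Finset.sum_comm]
              exact Finset.sum_congr rfl fun j _ => (Finset.sum_mul _ _ _).symm
          _ = 0 := Finset.sum_eq_zero fun j _ => by rw [hsum j, zero_mul]
      have hPhic : (prodSeq E m).mulVec c = c :=
        prodSeq_fix' m (fun k hk => hfix k hk c (hR k hk c hcc))
      have hPhiw : (prodSeq E m).mulVec w = w := by
        rw [hw, mulVec_sub, hPhix, hPhic]
      by_cases hw0 : w = 0
      · have hxc2 : x = c := by rwa [hw, sub_eq_zero] at hw0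
        exact ⟨v, fun p => by rw [hxc2]⟩
      · have := hC w hw0 hworth
        rw [hPhiw] at this
        exact absurd this (lt_irrefl _)
    · intro hcons k hk
      exact hR k hk x hcons
end

section
/- Let L ∈ ℝ^{N×N} be a symmetric matrix and x_0 ∈ ℝ^N. Define x : [1, ∞) → ℝ^N by x(t) = exp((t^{−1} − 1) L) x_0. Then x satisfies the time-varying linear differential equation x'(t) = −t^{−2} L x(t) for all t ≥ 1 with x(1) = x_0, and lim_{t→∞} x(t) = exp(−L) x_0. (In particular, if null(L) equals the consensus subspace but exp(−L) x_0 is not a consensus vector, the time-varying system with Laplacian t^{−2} L does not reach average consensus, even though the integral Laplacian over every time window has null space equal to the consensus subspace.) -/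
open Matrix Finset Filter

section Aux
attribute [local instance] Matrix.linftyOpNormedAddCommGroup Matrix.linftyOpNormedRing Matrix.linftyOpNormedAlgebra

private theorem aux_statement14 {N : ℕ}
    (L : Matrix (Fin N) (Fin N) ℝ) (hL : L.IsSymm) (x0 : Fin N → ℝ) :
    (∀ t : ℝ, 1 ≤ t →
      HasDerivAt (fun s : ℝ => (NormedSpace.exp ((s⁻¹ - 1) • L)).mulVec x0)
        ((-(t ^ 2)⁻¹) •
          L.mulVec ((NormedSpace.exp ((t⁻¹ - 1) • L)).mulVec x0)) t) ∧
    (NormedSpace.exp (((1 : ℝ)⁻¹ - 1) • L)).mulVec x0 = x0 ∧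
    Tendsto (fun t : ℝ => (NormedSpace.exp ((t⁻¹ - 1) • L)).mulVec x0) atTop
      (nhds ((NormedSpace.exp (-L)).mulVec x0)) := by
  -- the continuous linear map M ↦ M.mulVec x0
  let Φ : Matrix (Fin N) (Fin N) ℝ →L[ℝ] (Fin N → ℝ) :=
    LinearMap.toContinuousLinearMap
      { toFun := fun M => M.mulVec x0
        map_add' := fun M M' => Matrix.add_mulVec M M' x0
        map_smul' := fun c M => Matrix.smul_mulVec c M x0 }
  refine ⟨?_, ?_, ?_⟩
  · intro t ht
    have ht0 : t ≠ 0 := by positivity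
    have h1 : HasDerivAt (fun s : ℝ => s⁻¹ - 1) (-(t ^ 2)⁻¹) t :=
      ((hasDerivAt_inv ht0).sub_const 1).congr_deriv (by ring)
    have h2 : HasDerivAt (fun u : ℝ => NormedSpace.exp (u • L))
        (NormedSpace.exp ((t⁻¹ - 1) • L) * L) (t⁻¹ - 1) :=
      hasDerivAt_exp_smul_const L (t⁻¹ - 1)
    have h3 := (h2.scomp t h1)
    have h4 := (Φ.hasFDerivAt.comp_hasDerivAt t h3)
    have key : Φ ((-(t ^ 2)⁻¹) • (NormedSpace.exp ((t⁻¹ - 1) • L) * L))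
        = (-(t ^ 2)⁻¹) • L.mulVec ((NormedSpace.exp ((t⁻¹ - 1) • L)).mulVec x0) := by
      rw [_root_.map_smul]
      congr 1
      show (NormedSpace.exp ((t⁻¹ - 1) • L) * L).mulVec x0 = _
      rw [(Commute.refl L).smul_left (t⁻¹-1) |>.exp_left |>.eq, ← Matrix.mulVec_mulVec]
    replace h4 := h4.congr_deriv key
    exact h4
  · simp
  · have h0 : Tendsto (fun t : ℝ => (t⁻¹ - 1) • L) atTop (nhds ((-1 : ℝ) • L)) := by
      have := (tendsto_inv_atTop_zero.sub_const 1).smul_const (f := fun t : ℝ => t⁻¹ - 1) L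
      simpa using this
    have := ((NormedSpace.exp_continuous
        (𝔸 := Matrix (Fin N) (Fin N) ℝ)).tendsto _).comp h0
    have h2 := (Φ.continuous.tendsto _).comp this
    simp [Φ, neg_one_smul, Function.comp_def] at h2
    exact h2

end Aux

/-- For a symmetric matrix `L` and `x_0 ∈ ℝ^N`, the curve
`x(t) = exp((t⁻¹ - 1) L) x_0` satisfies `x'(t) = -t⁻² L x(t)` for all `t ≥ 1`,
with `x(1) = x_0`, and `x(t) → exp(-L) x_0` as `t → ∞`. -/
theorem rescaled_flow_solves_ode_and_converges {N : ℕ}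
    (L : Matrix (Fin N) (Fin N) ℝ) (hL : L.IsSymm) (x0 : Fin N → ℝ) :
    (∀ t : ℝ, 1 ≤ t →
      HasDerivAt (fun s : ℝ => (NormedSpace.exp ((s⁻¹ - 1) • L)).mulVec x0)
        ((-(t ^ 2)⁻¹) •
          L.mulVec ((NormedSpace.exp ((t⁻¹ - 1) • L)).mulVec x0)) t) ∧
    (NormedSpace.exp (((1 : ℝ)⁻¹ - 1) • L)).mulVec x0 = x0 ∧
    Tendsto (fun t : ℝ => (NormedSpace.exp ((t⁻¹ - 1) • L)).mulVec x0) atTop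
      (nhds ((NormedSpace.exp (-L)).mulVec x0)) :=
  aux_statement14 L hL x0
end
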